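/- Fix α ∈ (0,1), integers k ≥ 1, T ≥ 1, an interval I = [r,s] ⊆ [1,T] of length |I| = s−r+1, reals η > 0 and 0 < σ ≤ 1/2, step sizes 0 < γ₁ < γ₂ < ⋯ < γ_k with γ_{i+1}/γ_i ≤ 2 for all 1 ≤ i < k and γ_k ≥ √(1 + 1/|I|), and a sequence β₁,…,β_T ∈ [0,1]. For each expert i define α₁^i ∈ [0,1] and α_{t+1}^i := α_t^i + γ_i·(α − 1{β_t < α_t^i}); set ℓ_t^i := ℓ(β_t, α_t^i), and define weights w₁^i = 1, w_{t+1}^i = (1−σ)·w_t^i·exp(−η ℓ_t^i) + (σ/k)·Σ_j w_t^j·exp(−η ℓ_t^j), and probabilities p_t^i := w_t^i / Σ_j w_t^j. Then, writing γ_max := γ_k, for every sequence α*_r,…,α*_s ∈ [0,1]: (1/|I|)·Σ_{t=r}^s Σ_i p_t^i ℓ(β_t, α_t^i) − (1/|I|)·Σ_{t=r}^s ℓ(β_t, α*_t) ≤ (log(k/σ) + 2σ|I|)/(η|I|) + (η/|I|)·Σ_{t=r}^s Σ_i p_t^i ℓ(β_t, α_t^i)² + 2√3·(1+γ_max)²·max{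 √((Σ_{t=r+1}^s |α*_t − α*_{t−1}| + 1)/|I|), γ₁ }. -/

import Mathlib

noncomputable def pinball (α β θ : ℝ) : ℝ := α * (β - θ) - min 0 (β - θ)

lemma pinball_nonneg {α : ℝ} (h0 : 0 ≤ α) (h1 : α ≤ 1) (β θ : ℝ) :
    0 ≤ pinball α β θ := by
  unfold pinball
  rcases le_total 0 (β - θ) with h | h
  · rw [min_eq_left h]; nlinarith
  · rw [min_eq_right h]; nlinarith

lemma pinball_subgrad (α β θ u : ℝ) :
    pinball α β θ - pinball α β u ≤ ((if β < θ then (1:ℝ) else 0) - α) * (θ - u) := by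
  unfold pinball
  rcases lt_or_ge β θ with h | h
  · rw [if_pos h, min_eq_right (by linarith : β - θ ≤ 0)]
    have : min 0 (β - u) ≤ β - u := min_le_right _ _
    linarith
  · rw [if_neg (not_lt.2 h), min_eq_left (by linarith : (0:ℝ) ≤ β - θ)]
    have : min 0 (β - u) ≤ 0 := min_le_left _ _
    linarith

lemma exp_neg_le (x : ℝ) (hx : 0 ≤ x) : Real.exp (-x) ≤ 1 - x + x ^ 2 := by
  have h1 : 1 + x ≤ Real.exp x := by linarith [Real.add_one_le_exp x]
  have hpos : (0:ℝ) < 1 + x := by linarith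
  have h2 : Real.exp (-x) ≤ 1 / (1 + x) := by
    rw [Real.exp_neg, inv_eq_one_div]
    exact one_div_le_one_div_of_le hpos h1
  have h3 : 1 / (1 + x) ≤ 1 - x + x ^ 2 := by
    rw [div_le_iff₀ hpos]; nlinarith
  linarith

lemma neg_log_one_sub_le {σ : ℝ} (h0 : 0 < σ) (h : σ ≤ 1/2) :
    -Real.log (1 - σ) ≤ 2 * σ := by
  have hpos : (0:ℝ) < 1 - σ := by linarith
  have h1 : Real.exp (-(2*σ)) ≤ 1 - σ := by
    have h2 : 1 + 2*σ ≤ Real.exp (2*σ) := by linarith [Real.add_one_le_exp (2*σ)]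
    have h3 : (0:ℝ) < 1 + 2*σ := by linarith
    have h4 : Real.exp (-(2*σ)) ≤ 1/(1+2*σ) := by
      rw [Real.exp_neg, inv_eq_one_div]
      exact one_div_le_one_div_of_le h3 h2
    have : 1/(1+2*σ) ≤ 1 - σ := by rw [div_le_iff₀ h3]; nlinarith
    linarith
  have := Real.log_le_log (Real.exp_pos _) h1
  rw [Real.log_exp] at this
  linarith

lemma sq_diff_le (x u v D : ℝ) (hxu : |x - u| ≤ D) (hxv : |x - v| ≤ D) :
    (x - u)^2 - (x - v)^2 ≤ 2 * D * |u - v| := by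
  have h1 : (x-u)^2 - (x-v)^2 = ((x-u)-(x-v)) * ((x-u)+(x-v)) := by ring
  have h2 : ((x-u)-(x-v)) * ((x-u)+(x-v)) ≤ |((x-u)-(x-v)) * ((x-u)+(x-v))| := le_abs_self _
  rw [abs_mul] at h2
  have h3 : |(x-u)-(x-v)| = |u - v| := by rw [show (x-u)-(x-v) = v - u by ring, abs_sub_comm]
  have h4 : |(x-u)+(x-v)| ≤ 2 * D := (abs_add_le _ _).trans (by linarith)
  have hD : 0 ≤ D := le_trans (abs_nonneg _) hxu
  calc (x-u)^2 - (x-v)^2 ≤ |(x-u)-(x-v)| * |(x-u)+(x-v)| := by rw [h1]; exact h2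
    _ ≤ |u - v| * (2 * D) := by
        rw [h3]; exact mul_le_mul_of_nonneg_left h4 (abs_nonneg _)
    _ = 2 * D * |u - v| := by ring

set_option maxHeartbeats 1000000 in
/-- Dynamic regret bound for FACI (Theorem 3 of the paper): `k` copies of adaptive
conformal inference with step sizes `γ 0 < ⋯ < γ (k−1)` (consecutive ratios at most 2,
largest at least `√(1+1/|I|)`), aggregated by fixed-share exponential reweighting with
parameters `η, σ`.  Here expectations over the algorithm's internal randomness are
written as probability-weighted sums, `γ_max = γ (k−1)` and `|I| = s − r + 1`. -/
theorem faci_dynamic_regret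
    (α : ℝ) (hα : α ∈ Set.Ioo (0 : ℝ) 1)
    (k T : ℕ) (hk : 0 < k) (hT : 1 ≤ T)
    (r s : ℕ) (hr : 1 ≤ r) (hrs : r ≤ s) (hs : s ≤ T)
    (η σ : ℝ) (hη : 0 < η) (hσ0 : 0 < σ) (hσ : σ ≤ 1 / 2)
    (γ : Fin k → ℝ) (hγpos : ∀ i, 0 < γ i) (hγmono : StrictMono γ)
    (hγratio : ∀ i : Fin k, ∀ hik : (i : ℕ) + 1 < k, γ ⟨(i : ℕ) + 1, hik⟩ / γ i ≤ 2)
    (hγtop : Real.sqrt (1 + 1 / ((s : ℝ) - (r : ℝ) + 1))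
      ≤ γ ⟨k - 1, Nat.sub_lt hk one_pos⟩)
    (β : ℕ → ℝ) (hβ : ∀ t, 1 ≤ t → t ≤ T → β t ∈ Set.Icc (0 : ℝ) 1)
    (a : ℕ → Fin k → ℝ) (ha1 : ∀ i, a 1 i ∈ Set.Icc (0 : ℝ) 1)
    (harec : ∀ t, 1 ≤ t → ∀ i,
      a (t + 1) i = a t i + γ i * (α - if β t < a t i then 1 else 0))
    (w : ℕ → Fin k → ℝ) (hw1 : ∀ i, w 1 i = 1)
    (hwrec : ∀ t, 1 ≤ t → ∀ i,
      w (t + 1) i = (1 - σ) * w t i * Real.exp (-η * pinball α (β t) (a t i))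
        + σ / k * ∑ j, w t j * Real.exp (-η * pinball α (β t) (a t j)))
    (p : ℕ → Fin k → ℝ) (hp : ∀ t i, p t i = w t i / ∑ j, w t j)
    (astar : ℕ → ℝ) (hastar : ∀ t, r ≤ t → t ≤ s → astar t ∈ Set.Icc (0 : ℝ) 1) :
    (1 / ((s : ℝ) - (r : ℝ) + 1))
        * ∑ t ∈ Finset.Icc r s, ∑ i, p t i * pinball α (β t) (a t i)
      - (1 / ((s : ℝ) - (r : ℝ) + 1))
        * ∑ t ∈ Finset.Icc r s, pinball α (β t) (astar t)
    ≤ (Real.log ((k : ℝ) / σ) + 2 * σ * ((s : ℝ) - (r : ℝ) + 1))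
        / (η * ((s : ℝ) - (r : ℝ) + 1))
      + (η / ((s : ℝ) - (r : ℝ) + 1))
        * ∑ t ∈ Finset.Icc r s, ∑ i, p t i * (pinball α (β t) (a t i)) ^ 2
      + 2 * Real.sqrt 3 * (1 + γ ⟨k - 1, Nat.sub_lt hk one_pos⟩) ^ 2
        * max
            (Real.sqrt (((∑ t ∈ Finset.Icc (r + 1) s, |astar t - astar (t - 1)|) + 1)
              / ((s : ℝ) - (r : ℝ) + 1)))
            (γ ⟨0, hk⟩) := by
  obtain ⟨hα0, hα1⟩ := hα
  set imax : Fin k := ⟨k - 1, Nat.sub_lt hk one_pos⟩ with himax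
  set N : ℝ := (s : ℝ) - (r : ℝ) + 1 with hNdef
  have hN1 : (1:ℝ) ≤ N := by
    have : (r:ℝ) ≤ (s:ℝ) := by exact_mod_cast hrs
    simp only [hNdef]; linarith
  have hNpos : (0:ℝ) < N := by linarith
  have hNcast : ((s + 1 - r : ℕ) : ℝ) = N := by
    have h1 : r ≤ s + 1 := by omega
    push_cast [Nat.cast_sub h1]
    ring
  clear_value N
  -- weights positive
  have hwpos : ∀ t, 1 ≤ t → ∀ i, 0 < w t i := by
    intro t ht
    induction t, ht using Nat.le_induction with
    | base => intro i; rw [hw1]; norm_num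
    | succ t ht ih =>
      intro i
      rw [hwrec t ht i]
      have h1 : 0 < (1 - σ) * w t i * Real.exp (-η * pinball α (β t) (a t i)) := by
        apply mul_pos (mul_pos (by linarith) (ih i)) (Real.exp_pos _)
      have h2 : 0 ≤ σ / k * ∑ j, w t j * Real.exp (-η * pinball α (β t) (a t j)) := by
        apply mul_nonneg (by positivity)
        apply Finset.sum_nonneg
        intro j _
        exact le_of_lt (mul_pos (ih j) (Real.exp_pos _))
      linarith
  have hWpos : ∀ t, 1 ≤ t → 0 < ∑ j, w t j := by
    intro t ht
    apply Finset.sum_pos (fun j _ => hwpos t ht j)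
    exact Finset.univ_nonempty_iff.mpr (Fin.pos_iff_nonempty.mp hk)
  have hppos : ∀ t, 1 ≤ t → ∀ i, 0 < p t i := by
    intro t ht i; rw [hp]; exact div_pos (hwpos t ht i) (hWpos t ht)
  have hpsum : ∀ t, 1 ≤ t → ∑ i, p t i = 1 := by
    intro t ht
    simp only [hp]
    rw [← Finset.sum_div, div_self (ne_of_gt (hWpos t ht))]
  -- bounds on expert iterates
  have habound : ∀ t, 1 ≤ t → t ≤ T + 1 → ∀ i, -γ i ≤ a t i ∧ a t i ≤ 1 + γ i := by
    intro t ht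
    induction t, ht using Nat.le_induction with
    | base =>
      intro _ i
      obtain ⟨h1, h2⟩ := ha1 i
      constructor <;> nlinarith [hγpos i]
    | succ t ht ih =>
      intro htT i
      have htT' : t ≤ T := by omega
      obtain ⟨h1, h2⟩ := ih (by omega) i
      obtain ⟨hb1, hb2⟩ := hβ t ht htT'
      rw [harec t ht i]
      by_cases hc : β t < a t i
      · rw [if_pos hc]
        constructor <;> nlinarith [hγpos i]
      · rw [if_neg hc]
        push_neg at hc
        constructor <;> nlinarith [hγpos i]
  -- Part 1 : fixed-share regret vs each expert
  have hpart1 : ∀ i : Fin k,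
      (1 / N) * ∑ t ∈ Finset.Icc r s, ∑ j, p t j * pinball α (β t) (a t j)
        - (1 / N) * ∑ t ∈ Finset.Icc r s, pinball α (β t) (a t i)
      ≤ (Real.log ((k : ℝ) / σ) + 2 * σ * N) / (η * N)
        + (η / N) * ∑ t ∈ Finset.Icc r s, ∑ j, p t j * (pinball α (β t) (a t j)) ^ 2 := by
    intro i
    have hkR : (0:ℝ) < (k:ℝ) := by exact_mod_cast hk
    set W : ℕ → ℝ := fun t => ∑ j, w t j with hWdef
    set Z : ℕ → ℝ := fun t => ∑ j, p t j * Real.exp (-η * pinball α (β t) (a t j)) with hZdef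
    have hWsucc : ∀ t, 1 ≤ t →
        W (t + 1) = ∑ j, w t j * Real.exp (-η * pinball α (β t) (a t j)) := by
      intro t ht
      simp only [hWdef]
      rw [Finset.sum_congr rfl (fun j _ => hwrec t ht j), Finset.sum_add_distrib]
      have e1 : ∑ j : Fin k, ((1 - σ) * w t j * Real.exp (-η * pinball α (β t) (a t j)))
          = (1 - σ) * ∑ j, w t j * Real.exp (-η * pinball α (β t) (a t j)) := by
        rw [Finset.mul_sum]; exact Finset.sum_congr rfl fun j _ => by ring
      have e2 : ∑ _j : Fin k, (σ / (k:ℝ) * ∑ j, w t j * Real.exp (-η * pinball α (β t) (a t j)))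
          = (k:ℝ) * (σ / (k:ℝ) * ∑ j, w t j * Real.exp (-η * pinball α (β t) (a t j))) := by
        rw [Finset.sum_const, Finset.card_univ, Fintype.card_fin, nsmul_eq_mul]
      rw [e1, e2]
      field_simp
      ring
    have hZW : ∀ t, 1 ≤ t →
        W t * Z t = ∑ j, w t j * Real.exp (-η * pinball α (β t) (a t j)) := by
      intro t ht
      have hW0 : W t ≠ 0 := ne_of_gt (hWpos t ht)
      simp only [hZdef, hp]
      rw [Finset.mul_sum]
      refine Finset.sum_congr rfl fun j _ => ?_
      field_simp [hWdef]
      exact mul_div_cancel_left₀ _ hW0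
    have hWstep : ∀ t, 1 ≤ t → W (t + 1) = W t * Z t := by
      intro t ht; rw [hWsucc t ht, hZW t ht]
    -- Lemma A
    have hA : ∀ t, r ≤ t → t ≤ s + 1 → W t = W r * ∏ u ∈ Finset.Ico r t, Z u := by
      intro t htr
      induction t, htr using Nat.le_induction with
      | base => intro _; simp
      | succ t htr ih =>
        intro hts
        rw [hWstep t (le_trans hr htr), ih (by omega), Finset.prod_Ico_succ_top htr]
        ring
    -- Lemma B
    have hB : ∀ t, r ≤ t → t ≤ s + 1 →
        σ / (k:ℝ) * W r * (1 - σ) ^ (t - r)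
            * Real.exp (-η * ∑ u ∈ Finset.Ico r t, pinball α (β u) (a u i))
          ≤ w t i := by
      intro t htr
      induction t, htr using Nat.le_induction with
      | base =>
        intro _
        simp only [Nat.sub_self, pow_zero, Finset.Ico_self, Finset.sum_empty, mul_zero,
          Real.exp_zero, mul_one]
        rcases eq_or_lt_of_le hr with h1 | h1
        · rw [← h1, hw1 i]
          have hW1 : W 1 = (k:ℝ) := by
            simp only [hWdef]
            rw [Finset.sum_congr rfl (fun j _ => hw1 j)]
            simp
          rw [hW1]
          have hkk : σ / (k:ℝ) * (k:ℝ) = σ := by field_simp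
          rw [hkk]; linarith only [hσ]
        · obtain ⟨t', rfl⟩ : ∃ t', r = t' + 1 := ⟨r - 1, by omega⟩
          have ht'1 : 1 ≤ t' := by omega
          rw [hwrec t' ht'1 i, ← hWsucc t' ht'1]
          have hpos1 : 0 ≤ (1 - σ) * w t' i * Real.exp (-η * pinball α (β t') (a t' i)) :=
            mul_nonneg (mul_nonneg (by linarith only [hσ]) (le_of_lt (hwpos t' ht'1 i)))
              (le_of_lt (Real.exp_pos _))
          linarith only [hpos1]
      | succ t htr ih =>
        intro hts
        have ht1 : 1 ≤ t := le_trans hr htr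
        have hle : σ / (k:ℝ) * W r * (1 - σ) ^ (t - r)
            * Real.exp (-η * ∑ u ∈ Finset.Ico r t, pinball α (β u) (a u i)) ≤ w t i :=
          ih (by omega)
        rw [hwrec t ht1 i]
        have hσ1 : (0:ℝ) < 1 - σ := by linarith only [hσ]
        have hstep : (1 - σ) * (σ / (k:ℝ) * W r * (1 - σ) ^ (t - r)
              * Real.exp (-η * ∑ u ∈ Finset.Ico r t, pinball α (β u) (a u i)))
              * Real.exp (-η * pinball α (β t) (a t i))
            ≤ (1 - σ) * w t i * Real.exp (-η * pinball α (β t) (a t i)) := by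
          apply mul_le_mul_of_nonneg_right _ (le_of_lt (Real.exp_pos _))
          exact mul_le_mul_of_nonneg_left hle (le_of_lt hσ1)
        have hsum0 : 0 ≤ σ / (k:ℝ) * ∑ j, w t j * Real.exp (-η * pinball α (β t) (a t j)) := by
          apply mul_nonneg (by positivity)
          exact Finset.sum_nonneg fun j _ => le_of_lt (mul_pos (hwpos t ht1 j) (Real.exp_pos _))
        have heq : σ / (k:ℝ) * W r * (1 - σ) ^ (t + 1 - r)
              * Real.exp (-η * ∑ u ∈ Finset.Ico r (t + 1), pinball α (β u) (a u i))
            = (1 - σ) * (σ / (k:ℝ) * W r * (1 - σ) ^ (t - r)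
              * Real.exp (-η * ∑ u ∈ Finset.Ico r t, pinball α (β u) (a u i)))
              * Real.exp (-η * pinball α (β t) (a t i)) := by
          rw [Finset.sum_Ico_succ_top htr, show t + 1 - r = (t - r) + 1 by omega, pow_succ]
          rw [show -η * ((∑ u ∈ Finset.Ico r t, pinball α (β u) (a u i)) + pinball α (β t) (a t i))
              = -η * (∑ u ∈ Finset.Ico r t, pinball α (β u) (a u i)) + -η * pinball α (β t) (a t i) by ring]
          rw [Real.exp_add]
          ring
        rw [heq]
        linarith only [hstep, hsum0]
    -- deduce the key product inequality
    have hwle : w (s + 1) i ≤ W (s + 1) := by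
      simp only [hWdef]
      exact Finset.single_le_sum (fun j _ => le_of_lt (hwpos (s+1) (by omega) j))
        (Finset.mem_univ i)
    have hIccIco : Finset.Ico r (s + 1) = Finset.Icc r s := by rw [Finset.Ico_add_one_right_eq_Icc]
    have hkey : σ / (k:ℝ) * (1 - σ) ^ (s + 1 - r)
          * Real.exp (-η * ∑ u ∈ Finset.Icc r s, pinball α (β u) (a u i))
        ≤ ∏ u ∈ Finset.Icc r s, Z u := by
      have h1 := hB (s + 1) (by omega) (le_refl _)
      have h2 := hA (s + 1) (by omega) (le_refl _)
      rw [hIccIco] at h1 h2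
      have h3 : w (s + 1) i ≤ W r * ∏ u ∈ Finset.Icc r s, Z u := by rw [← h2]; exact hwle
      have h4 := h1.trans h3
      have hWr : 0 < W r := hWpos r hr
      have h4' : W r * (σ / (k:ℝ) * (1 - σ) ^ (s + 1 - r)
            * Real.exp (-η * ∑ u ∈ Finset.Icc r s, pinball α (β u) (a u i)))
          ≤ W r * ∏ u ∈ Finset.Icc r s, Z u := by
        calc W r * (σ / (k:ℝ) * (1 - σ) ^ (s + 1 - r)
            * Real.exp (-η * ∑ u ∈ Finset.Icc r s, pinball α (β u) (a u i)))
            = σ / (k:ℝ) * W r * (1 - σ) ^ (s + 1 - r)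
            * Real.exp (-η * ∑ u ∈ Finset.Icc r s, pinball α (β u) (a u i)) := by ring
          _ ≤ _ := h4
      exact le_of_mul_le_mul_left h4' hWr
    -- bound each Z t
    have hZle : ∀ t ∈ Finset.Icc r s, Z t
        ≤ Real.exp (-η * (∑ j, p t j * pinball α (β t) (a t j))
            + η ^ 2 * (∑ j, p t j * (pinball α (β t) (a t j)) ^ 2)) := by
      intro t htmem
      have ht1 : 1 ≤ t := le_trans hr (Finset.mem_Icc.mp htmem).1
      have step1 : Z t ≤ ∑ j, p t j * (1 - η * pinball α (β t) (a t j)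
          + (η * pinball α (β t) (a t j)) ^ 2) := by
        simp only [hZdef]
        apply Finset.sum_le_sum
        intro j _
        apply mul_le_mul_of_nonneg_left _ (le_of_lt (hppos t ht1 j))
        rw [show -η * pinball α (β t) (a t j) = -(η * pinball α (β t) (a t j)) by ring]
        exact exp_neg_le _ (mul_nonneg (le_of_lt hη) (pinball_nonneg (le_of_lt hα0) (le_of_lt hα1) _ _))
      have step2 : ∑ j, p t j * (1 - η * pinball α (β t) (a t j)
            + (η * pinball α (β t) (a t j)) ^ 2)
          = 1 - η * (∑ j, p t j * pinball α (β t) (a t j))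
            + η ^ 2 * (∑ j, p t j * (pinball α (β t) (a t j)) ^ 2) := by
        rw [Finset.sum_congr rfl (fun j _ => show p t j * (1 - η * pinball α (β t) (a t j)
            + (η * pinball α (β t) (a t j)) ^ 2)
            = p t j - η * (p t j * pinball α (β t) (a t j))
              + η ^ 2 * (p t j * (pinball α (β t) (a t j)) ^ 2) from by ring)]
        rw [Finset.sum_add_distrib, Finset.sum_sub_distrib, ← Finset.mul_sum, ← Finset.mul_sum,
          hpsum t ht1]
      have step3 : 1 + (-η * (∑ j, p t j * pinball α (β t) (a t j))
            + η ^ 2 * (∑ j, p t j * (pinball α (β t) (a t j)) ^ 2))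
          ≤ Real.exp (-η * (∑ j, p t j * pinball α (β t) (a t j))
            + η ^ 2 * (∑ j, p t j * (pinball α (β t) (a t j)) ^ 2)) := by
        linarith [Real.add_one_le_exp (-η * (∑ j, p t j * pinball α (β t) (a t j))
            + η ^ 2 * (∑ j, p t j * (pinball α (β t) (a t j)) ^ 2))]
      calc Z t ≤ _ := step1
        _ = _ := step2
        _ ≤ _ := by linarith only [step3]
    have hZnonneg : ∀ t ∈ Finset.Icc r s, 0 ≤ Z t := by
      intro t htmem
      have ht1 : 1 ≤ t := le_trans hr (Finset.mem_Icc.mp htmem).1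
      exact Finset.sum_nonneg fun j _ =>
        le_of_lt (mul_pos (hppos t ht1 j) (Real.exp_pos _))
    have hprodle : ∏ u ∈ Finset.Icc r s, Z u
        ≤ Real.exp (∑ t ∈ Finset.Icc r s, (-η * (∑ j, p t j * pinball α (β t) (a t j))
            + η ^ 2 * (∑ j, p t j * (pinball α (β t) (a t j)) ^ 2))) := by
      rw [Real.exp_sum]
      exact Finset.prod_le_prod hZnonneg hZle
    -- take logs
    set L : ℝ := ∑ u ∈ Finset.Icc r s, pinball α (β u) (a u i) with hLdef
    set E : ℝ := ∑ t ∈ Finset.Icc r s, ∑ j, p t j * pinball α (β t) (a t j) with hEdef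
    set Q : ℝ := ∑ t ∈ Finset.Icc r s, ∑ j, p t j * (pinball α (β t) (a t j)) ^ 2 with hQdef
    have hsumsplit : ∑ t ∈ Finset.Icc r s, (-η * (∑ j, p t j * pinball α (β t) (a t j))
            + η ^ 2 * (∑ j, p t j * (pinball α (β t) (a t j)) ^ 2))
        = -η * E + η ^ 2 * Q := by
      rw [Finset.sum_add_distrib, ← Finset.mul_sum, ← Finset.mul_sum, hEdef, hQdef]
    have hσ1 : (0:ℝ) < 1 - σ := by linarith
    have hlhspos : 0 < σ / (k:ℝ) * (1 - σ) ^ (s + 1 - r) * Real.exp (-η * L) := by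
      positivity
    have hlog : Real.log (σ / (k:ℝ) * (1 - σ) ^ (s + 1 - r) * Real.exp (-η * L))
        ≤ -η * E + η ^ 2 * Q := by
      have := Real.log_le_log hlhspos (hkey.trans (hprodle.trans_eq (by rw [hsumsplit])))
      rwa [Real.log_exp] at this
    rw [Real.log_mul (by positivity) (ne_of_gt (Real.exp_pos _)),
        Real.log_mul (by positivity) (by positivity), Real.log_exp, Real.log_pow] at hlog
    have hlogdiv : Real.log (σ / (k:ℝ)) = -Real.log ((k:ℝ) / σ) := by
      rw [Real.log_div (ne_of_gt hσ0) (ne_of_gt hkR), Real.log_div (ne_of_gt hkR) (ne_of_gt hσ0)]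
      ring
    have hlogpow : -(2 * σ) * N ≤ (s + 1 - r : ℕ) * Real.log (1 - σ) := by
      have h1 : -Real.log (1 - σ) ≤ 2 * σ := neg_log_one_sub_le hσ0 hσ
      rw [hNcast]
      nlinarith [mul_le_mul_of_nonneg_left h1 (le_of_lt hNpos)]
    rw [hlogdiv] at hlog
    clear_value L E Q W Z
    -- final inequality
    have hmain : η * E - η * L ≤ Real.log ((k:ℝ) / σ) + 2 * σ * N + η ^ 2 * Q := by
      linarith only [hlog, hlogpow]
    have hηN : (0:ℝ) < η * N := mul_pos hη hNpos
    have hfin : (η * E - η * L) / (η * N)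
        ≤ (Real.log ((k:ℝ) / σ) + 2 * σ * N + η ^ 2 * Q) / (η * N) := by gcongr
    have hη0 : η ≠ 0 := ne_of_gt hη
    have hN0 : N ≠ 0 := ne_of_gt hNpos
    have e1 : (η * E - η * L) / (η * N) = (1 / N) * E - (1 / N) * L := by
      field_simp [hη0, hN0]
    have e2 : (Real.log ((k:ℝ) / σ) + 2 * σ * N + η ^ 2 * Q) / (η * N)
        = (Real.log ((k:ℝ) / σ) + 2 * σ * N) / (η * N) + (η / N) * Q := by
      field_simp [hη0, hN0]
    rw [e1, e2] at hfin
    exact hfin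
  -- Part 2 : existence of a good expert
  have hpart2 : ∃ i : Fin k,
      (∑ t ∈ Finset.Icc r s, pinball α (β t) (a t i))
        - ∑ t ∈ Finset.Icc r s, pinball α (β t) (astar t)
      ≤ N * (2 * Real.sqrt 3 * (1 + γ imax) ^ 2
          * max
            (Real.sqrt (((∑ t ∈ Finset.Icc (r + 1) s, |astar t - astar (t - 1)|) + 1) / N))
            (γ ⟨0, hk⟩)) := by
    set V : ℝ := ∑ t ∈ Finset.Icc (r + 1) s, |astar t - astar (t - 1)| with hVdef
    set D : ℝ := 1 + γ imax with hDdef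
    have hγmaxpos : 0 < γ imax := hγpos imax
    have hD1 : (1:ℝ) ≤ D := by simp only [hDdef]; linarith only [hγmaxpos]
    have hγle : ∀ i : Fin k, γ i ≤ γ imax := by
      intro i
      apply hγmono.monotone
      simp only [himax, Fin.le_def]
      omega
    have hVnonneg : 0 ≤ V :=
      Finset.sum_nonneg fun t _ => abs_nonneg _
    have hVle : V ≤ N - 1 := by
      have h1 : V ≤ ∑ t ∈ Finset.Icc (r + 1) s, (1:ℝ) := by
        apply Finset.sum_le_sum
        intro t htmem
        obtain ⟨ht1, ht2⟩ := Finset.mem_Icc.mp htmem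
        obtain ⟨hu1, hu2⟩ := hastar t (by omega) ht2
        obtain ⟨hv1, hv2⟩ := hastar (t - 1) (by omega) (by omega)
        rw [abs_le]
        constructor <;> linarith
      rw [Finset.sum_const, Nat.card_Icc, nsmul_eq_mul, mul_one] at h1
      have h2 : ((s + 1 - (r + 1) : ℕ) : ℝ) = N - 1 := by
        rw [show s + 1 - (r + 1) = s + 1 - r - 1 by omega]
        rw [Nat.cast_sub (by omega), hNcast]
        norm_num
      linarith only [h1, h2]
    set c : ℝ := (V + 1) / N with hcdef
    have hcpos : 0 < c := by
      apply div_pos _ hNpos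
      linarith only [hVnonneg]
    have hc1 : c ≤ 1 := by
      rw [hcdef, div_le_one hNpos]
      linarith only [hVle]
    have hcN : c * N = V + 1 := by
      rw [hcdef]; field_simp
    have hsc : Real.sqrt c * Real.sqrt c = c := Real.mul_self_sqrt (le_of_lt hcpos)
    have hscpos : 0 < Real.sqrt c := Real.sqrt_pos.mpr hcpos
    clear_value V D c
    have hsqrt3 : (5/4 : ℝ) ≤ Real.sqrt 3 := by
      nlinarith [Real.sq_sqrt (by norm_num : (0:ℝ) ≤ 3), Real.sqrt_nonneg 3]
    -- per-expert regret bound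
    have hexp : ∀ i : Fin k,
        (∑ t ∈ Finset.Icc r s, pinball α (β t) (a t i))
          - ∑ t ∈ Finset.Icc r s, pinball α (β t) (astar t)
        ≤ (D ^ 2 + 2 * D * V) / (2 * γ i) + γ i * N / 2 := by
      intro i
      have hγipos := hγpos i
      have habsD : ∀ t u, r ≤ t → t ≤ s → u ∈ Set.Icc (0:ℝ) 1 → |a t i - u| ≤ D := by
        intro t u htr hts hu
        obtain ⟨ha1', ha2'⟩ := habound t (by omega) (by omega) i
        obtain ⟨hu1, hu2⟩ := hu
        have := hγle i
        rw [abs_le]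
        constructor <;> (simp only [hDdef]; linarith)
      -- per-step inequality
      have hstep : ∀ t ∈ Finset.Icc r s,
          pinball α (β t) (a t i) - pinball α (β t) (astar t)
            ≤ ((a t i - astar t) ^ 2 - (a (t + 1) i - astar t) ^ 2) / (2 * γ i) + γ i / 2 := by
        intro t htmem
        obtain ⟨htr, hts⟩ := Finset.mem_Icc.mp htmem
        have ht1 : 1 ≤ t := le_trans hr htr
        set g : ℝ := (if β t < a t i then (1:ℝ) else 0) - α with hgdef
        have hsub := pinball_subgrad α (β t) (a t i) (astar t)
        rw [← hgdef] at hsub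
        clear_value g
        have hupd : a (t + 1) i = a t i - γ i * g := by
          rw [harec t ht1 i]; simp only [hgdef]; ring
        have hg2 : g ^ 2 ≤ 1 := by
          simp only [hgdef]
          split_ifs <;> nlinarith [hα0, hα1]
        have hident : g * (a t i - astar t)
            = ((a t i - astar t) ^ 2 - (a (t + 1) i - astar t) ^ 2) / (2 * γ i)
              + γ i * g ^ 2 / 2 := by
          rw [hupd]
          field_simp
          ring
        have hlast : γ i * g ^ 2 / 2 ≤ γ i / 2 := by
          have hmul := mul_le_mul_of_nonneg_left hg2 (le_of_lt hγipos)
          rw [mul_one] at hmul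
          linarith only [hmul]
        calc pinball α (β t) (a t i) - pinball α (β t) (astar t)
            ≤ g * (a t i - astar t) := hsub
          _ = ((a t i - astar t) ^ 2 - (a (t + 1) i - astar t) ^ 2) / (2 * γ i)
              + γ i * g ^ 2 / 2 := hident
          _ ≤ _ := by linarith only [hlast]
      -- sum the per-step inequalities
      have hsum1 := Finset.sum_le_sum hstep
      rw [Finset.sum_sub_distrib] at hsum1
      have hsum2 : ∑ t ∈ Finset.Icc r s,
            (((a t i - astar t) ^ 2 - (a (t + 1) i - astar t) ^ 2) / (2 * γ i) + γ i / 2)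
          = (∑ t ∈ Finset.Icc r s, ((a t i - astar t) ^ 2 - (a (t + 1) i - astar t) ^ 2))
              / (2 * γ i) + γ i * N / 2 := by
        rw [Finset.sum_add_distrib, Finset.sum_const, Nat.card_Icc, nsmul_eq_mul, hNcast,
          ← Finset.sum_div]
        ring
      rw [hsum2] at hsum1
      -- telescoping bound
      have htel : ∑ t ∈ Finset.Icc r s, ((a t i - astar t) ^ 2 - (a (t + 1) i - astar t) ^ 2)
          ≤ D ^ 2 + 2 * D * V := by
        rw [Finset.sum_sub_distrib]
        have e1 : ∑ t ∈ Finset.Icc r s, (a t i - astar t) ^ 2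
            = (a r i - astar r) ^ 2 + ∑ t ∈ Finset.Icc (r + 1) s, (a t i - astar t) ^ 2 := by
          rw [Finset.Icc_eq_cons_Ioc hrs, Finset.sum_cons, ← Finset.Icc_add_one_left_eq_Ioc]
        have e2 : ∑ t ∈ Finset.Icc r s, (a (t + 1) i - astar t) ^ 2
            = ∑ t ∈ Finset.Icc (r + 1) (s + 1), (a t i - astar (t - 1)) ^ 2 := by
          apply Finset.sum_nbij' (fun t => t + 1) (fun t => t - 1)
          · intro t htmem
            simp only [Finset.mem_Icc] at *
            omega
          · intro t htmem
            simp only [Finset.mem_Icc] at *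
            omega
          · intro t htmem
            simp only [Finset.mem_Icc] at htmem
            omega
          · intro t htmem
            simp only [Finset.mem_Icc] at htmem
            omega
          · intro t htmem
            simp only [Nat.add_sub_cancel]
        have e3 : ∑ t ∈ Finset.Icc (r + 1) s, (a t i - astar (t - 1)) ^ 2
            ≤ ∑ t ∈ Finset.Icc (r + 1) (s + 1), (a t i - astar (t - 1)) ^ 2 :=
          Finset.sum_le_sum_of_subset_of_nonneg
            (Finset.Icc_subset_Icc_right (by omega)) (fun _ _ _ => sq_nonneg _)
        have e4 : ∑ t ∈ Finset.Icc (r + 1) s, ((a t i - astar t) ^ 2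
              - (a t i - astar (t - 1)) ^ 2)
            ≤ ∑ t ∈ Finset.Icc (r + 1) s, 2 * D * |astar t - astar (t - 1)| := by
          apply Finset.sum_le_sum
          intro t htmem
          obtain ⟨ht1, ht2⟩ := Finset.mem_Icc.mp htmem
          exact sq_diff_le _ _ _ _
            (habsD t (astar t) (by omega) ht2 (hastar t (by omega) ht2))
            (habsD t (astar (t - 1)) (by omega) ht2 (hastar (t - 1) (by omega) (by omega)))
        have e5 : (a r i - astar r) ^ 2 ≤ D ^ 2 := by
          have h := habsD r (astar r) (le_refl r) hrs (hastar r (le_refl r) hrs)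
          have hD0 : 0 ≤ D := by linarith only [hD1]
          nlinarith [abs_nonneg (a r i - astar r), sq_abs (a r i - astar r)]
        have e6 : ∑ t ∈ Finset.Icc (r + 1) s, 2 * D * |astar t - astar (t - 1)|
            = 2 * D * V := by
          rw [hVdef, Finset.mul_sum]
        rw [Finset.sum_sub_distrib] at e4
        linarith only [e1, e2 ▸ e3, e4, e5, e6.le, e6.ge]
      have hdivle : (∑ t ∈ Finset.Icc r s, ((a t i - astar t) ^ 2
            - (a (t + 1) i - astar t) ^ 2)) / (2 * γ i)
          ≤ (D ^ 2 + 2 * D * V) / (2 * γ i) := by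
        gcongr
      linarith only [hsum1, hdivle]
    -- choose a good expert
    rcases le_or_gt (Real.sqrt c) (γ ⟨0, hk⟩) with hcase | hcase
    · -- small path length : use the smallest step size
      refine ⟨⟨0, hk⟩, ?_⟩
      have hM : max (Real.sqrt c) (γ ⟨0, hk⟩) = γ ⟨0, hk⟩ := max_eq_right hcase
      rw [hM]
      set γ0 : ℝ := γ ⟨0, hk⟩ with hγ0def
      have hγ0pos : 0 < γ0 := hγpos _
      clear_value γ0
      have hcγ : c ≤ γ0 ^ 2 := by
        have hmul := mul_le_mul hcase hcase (le_of_lt hscpos) (by linarith only [hcase, hscpos])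
        linarith only [hmul, hsc]
      have hD0 : (0:ℝ) ≤ D := by linarith only [hD1]
      have hd2 : (1:ℝ) ≤ D ^ 2 := by
        have hmul := mul_le_mul hD1 hD1 (by norm_num) hD0
        rw [mul_one] at hmul
        linarith only [hmul]
      have t3 : D ^ 2 + 2 * D * V ≤ 2 * D ^ 2 * (V + 1) := by
        have hv : (0:ℝ) ≤ 2 * D * V * (D - 1) :=
          mul_nonneg (mul_nonneg (mul_nonneg (by norm_num) hD0) hVnonneg)
            (by linarith only [hD1])
        have hD2 : (0:ℝ) ≤ D ^ 2 := by positivity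
        linarith only [hv, hD2]
      have h1 : (D ^ 2 + 2 * D * V) / (2 * γ0) ≤ D ^ 2 * γ0 * N := by
        rw [div_le_iff₀ (by positivity)]
        have t1 : 2 * D ^ 2 * N * c ≤ 2 * D ^ 2 * N * γ0 ^ 2 :=
          mul_le_mul_of_nonneg_left hcγ (by positivity)
        have tcn : 2 * D ^ 2 * (V + 1) = 2 * D ^ 2 * N * c := by rw [← hcN]; ring
        linarith only [t3, t1, tcn]
      have h2 : γ0 * N / 2 ≤ D ^ 2 * γ0 * N / 2 := by
        have hprod : (0:ℝ) ≤ (D ^ 2 - 1) * (γ0 * N) :=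
          mul_nonneg (by linarith only [hd2]) (by positivity)
        linarith only [hprod]
      have h3 : D ^ 2 * γ0 * N + D ^ 2 * γ0 * N / 2 ≤ N * (2 * Real.sqrt 3 * D ^ 2 * γ0) := by
        have hprod : (0:ℝ) ≤ (2 * Real.sqrt 3 - 3 / 2) * (D ^ 2 * γ0 * N) :=
          mul_nonneg (by linarith only [hsqrt3]) (by positivity)
        linarith only [hprod]
      refine le_trans (hexp ⟨0, hk⟩) ?_
      rw [← hγ0def]
      linarith only [h1, h2, h3]
    · -- large path length : find a step size close to sqrt c
      have hsc_le_top : Real.sqrt c ≤ γ imax := by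
        have h1 : Real.sqrt c ≤ 1 := Real.sqrt_le_one.mpr hc1
        have h2 : (1:ℝ) ≤ Real.sqrt (1 + 1 / N) := by
          have h1N : (0:ℝ) < 1 / N := by positivity
          have h3 : Real.sqrt 1 ≤ Real.sqrt (1 + 1 / N) :=
            Real.sqrt_le_sqrt (by linarith only [h1N])
          rwa [Real.sqrt_one] at h3
        linarith only [h1, h2, hγtop]
      have hne : (Finset.univ.filter (fun j : Fin k => Real.sqrt c ≤ γ j)).Nonempty :=
        ⟨imax, by simp [hsc_le_top]⟩
      set j0 : Fin k := (Finset.univ.filter (fun j : Fin k => Real.sqrt c ≤ γ j)).min' hne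
        with hj0def
      have hj0mem := (Finset.univ.filter (fun j : Fin k => Real.sqrt c ≤ γ j)).min'_mem hne
      rw [Finset.mem_filter] at hj0mem
      have hj0 : Real.sqrt c ≤ γ j0 := hj0mem.2
      have hj0pos : 0 < (j0 : ℕ) := by
        rcases Nat.eq_zero_or_pos (j0 : ℕ) with h | h
        swap
        · exact h
        · exfalso
          have : j0 = ⟨0, hk⟩ := Fin.ext h
          rw [this] at hj0
          linarith only [hj0, hcase]
      have hj0lt : (j0 : ℕ) < k := j0.isLt
      set i1 : Fin k := ⟨(j0 : ℕ) - 1, by omega⟩ with hi1def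
      have hi1val : (i1 : ℕ) = (j0 : ℕ) - 1 := by rw [hi1def]
      have hi1lt : γ i1 < Real.sqrt c := by
        by_contra hcon
        push_neg at hcon
        have hmem : i1 ∈ Finset.univ.filter (fun j : Fin k => Real.sqrt c ≤ γ j) := by
          rw [Finset.mem_filter]; exact ⟨Finset.mem_univ _, hcon⟩
        have := Finset.min'_le _ _ hmem
        rw [← hj0def] at this
        have h2 : (j0 : ℕ) ≤ (i1 : ℕ) := this
        omega
      have hj0eq : (⟨(i1 : ℕ) + 1, by omega⟩ : Fin k) = j0 := by
        apply Fin.ext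
        show (i1 : ℕ) + 1 = (j0 : ℕ)
        omega
      have hratio : γ j0 ≤ 2 * γ i1 := by
        have h1 := hγratio i1 (by omega)
        rw [hj0eq] at h1
        rw [div_le_iff₀ (hγpos i1)] at h1
        linarith only [h1]
      have hi1half : Real.sqrt c / 2 ≤ γ i1 := by linarith only [hj0, hratio]
      refine ⟨i1, ?_⟩
      have hM : max (Real.sqrt c) (γ ⟨0, hk⟩) = Real.sqrt c := max_eq_left hcase.le
      rw [hM]
      have hγi1pos : 0 < γ i1 := hγpos i1
      have hD0 : (0:ℝ) ≤ D := by linarith only [hD1]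
      have hd2 : (1:ℝ) ≤ D ^ 2 := by
        have hmul := mul_le_mul hD1 hD1 (by norm_num) hD0
        rw [mul_one] at hmul
        linarith only [hmul]
      have t3 : D ^ 2 + 2 * D * V ≤ 2 * D ^ 2 * (V + 1) := by
        have hv : (0:ℝ) ≤ 2 * D * V * (D - 1) :=
          mul_nonneg (mul_nonneg (mul_nonneg (by norm_num) hD0) hVnonneg)
            (by linarith only [hD1])
        have hD2 : (0:ℝ) ≤ D ^ 2 := by positivity
        linarith only [hv, hD2]
      have h1 : (D ^ 2 + 2 * D * V) / (2 * γ i1) ≤ 2 * D ^ 2 * Real.sqrt c * N := by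
        rw [div_le_iff₀ (by positivity)]
        have t1 : 2 * D ^ 2 * Real.sqrt c * N * Real.sqrt c
            ≤ 2 * D ^ 2 * Real.sqrt c * N * (2 * γ i1) := by
          apply mul_le_mul_of_nonneg_left (by linarith only [hi1half]) (by positivity)
        have t2 : 2 * D ^ 2 * Real.sqrt c * N * Real.sqrt c = 2 * D ^ 2 * (V + 1) := by
          calc 2 * D ^ 2 * Real.sqrt c * N * Real.sqrt c
              = 2 * D ^ 2 * N * (Real.sqrt c * Real.sqrt c) := by ring
            _ = 2 * D ^ 2 * N * c := by rw [hsc]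
            _ = 2 * D ^ 2 * (c * N) := by ring
            _ = 2 * D ^ 2 * (V + 1) := by rw [hcN]
        linarith only [t1, t2, t3]
      have h2 : γ i1 * N / 2 ≤ D ^ 2 * Real.sqrt c * N / 2 := by
        have hprod : (0:ℝ) ≤ (D ^ 2 - 1) * (Real.sqrt c * N) :=
          mul_nonneg (by linarith only [hd2]) (by positivity)
        have hprod2 : γ i1 * N ≤ Real.sqrt c * N :=
          mul_le_mul_of_nonneg_right (le_of_lt hi1lt) (le_of_lt hNpos)
        linarith only [hprod, hprod2]
      have h3 : 2 * D ^ 2 * Real.sqrt c * N + D ^ 2 * Real.sqrt c * N / 2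
          ≤ N * (2 * Real.sqrt 3 * D ^ 2 * Real.sqrt c) := by
        have hprod : (0:ℝ) ≤ (2 * Real.sqrt 3 - 5 / 2) * (D ^ 2 * Real.sqrt c * N) :=
          mul_nonneg (by linarith only [hsqrt3]) (by positivity)
        linarith only [hprod]
      refine le_trans (hexp i1) ?_
      linarith only [h1, h2, h3]
  -- combine
  obtain ⟨i, hi⟩ := hpart2
  have h1 := hpart1 i
  set C : ℝ := 2 * Real.sqrt 3 * (1 + γ imax) ^ 2
          * max
            (Real.sqrt (((∑ t ∈ Finset.Icc (r + 1) s, |astar t - astar (t - 1)|) + 1) / N))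
            (γ ⟨0, hk⟩) with hC
  have h2 : (1 / N) * ((∑ t ∈ Finset.Icc r s, pinball α (β t) (a t i))
      - ∑ t ∈ Finset.Icc r s, pinball α (β t) (astar t)) ≤ C := by
    have := mul_le_mul_of_nonneg_left hi (le_of_lt (one_div_pos.mpr hNpos))
    calc (1 / N) * ((∑ t ∈ Finset.Icc r s, pinball α (β t) (a t i))
      - ∑ t ∈ Finset.Icc r s, pinball α (β t) (astar t)) ≤ (1/N) * (N * C) := this
      _ = C := by field_simp
  rw [mul_sub] at h2
  linarith
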